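/- Let 1 ≤ p ≤ 2 and let X be a complex Banach space. Suppose that for every sequence (x_n)_{n∈ℕ} ⊂ X there exists a constant C ≥ 1 (possibly depending on the sequence) such that ‖∑_{n=1}^N a_n x_n n^{-s}‖_{H_p(X)} ≤ C · E_ε ‖∑_{n=1}^N ε_n a_n x_n n^{-s}‖_{H_p(X)} for all N and all scalars a_1,…,a_N ∈ ℂ. Then there exists a single constant C ≥ 1 such that ‖∑_{n=1}^N x_n n^{-s}‖_{H_p(X)} ≤ C · E_ε ‖∑_{n=1}^N ε_n x_n n^{-s}‖_{H_p(X)} for every N and every x_1,…,x_N ∈ X. -/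

import Mathlib

open MeasureTheory TopologicalSpace

noncomputable section

instance : MeasurableSpace Circle := borel Circle
instance : BorelSpace Circle := ⟨rfl⟩

/-- The Haar probability measure on the circle `𝕋 = {z : ℂ, |z| = 1}`. -/
def muT : Measure Circle := Measure.haarMeasure ⊤

/-- The Haar probability measure on the infinite polytorus `𝕋^ℕ`
(equivalently, the product of the Haar probability measures of the factors). -/
def muTN : Measure (ℕ → Circle) := Measure.haarMeasure ⊤

instance : IsProbabilityMeasure muT := by
  constructor
  simpa [muT] using Measure.haarMeasure_self (K₀ := (⊤ : PositiveCompacts Circle))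

instance : IsProbabilityMeasure muTN := by
  constructor
  simpa [muTN] using Measure.haarMeasure_self (K₀ := (⊤ : PositiveCompacts (ℕ → Circle)))

/-- The monomial `z ↦ z^{α(n)}`, where `α(n)` is the finitely supported sequence of exponents
in the prime factorization `n = ∏_i pᵢ^{αᵢ(n)}`, the primes `pᵢ = Nat.nth Nat.Prime i` being
listed in increasing order.  (For `n ≥ 1`, every prime factor of `n` is among the first `n`
primes, so the range `Finset.range n` captures all nonzero exponents.) -/
def mon (n : ℕ) (z : ℕ → Circle) : ℂ :=
  ∏ i ∈ Finset.range n, (z i : ℂ) ^ (Nat.factorization n (Nat.nth Nat.Prime i))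

/-- The complex sign `±1` associated to a boolean sign choice. -/
def sgn {N : ℕ} (ε : Fin N → Bool) (n : Fin N) : ℂ := if ε n then 1 else -1

/-- The average `E_ε = 2^{-N} ∑_{ε ∈ {-1,1}^N}` over all choices of `N` signs. -/
def Eavg (N : ℕ) (F : (Fin N → Bool) → ℝ) : ℝ :=
  (2 ^ N : ℝ)⁻¹ * ∑ ε : Fin N → Bool, F ε

/-- The `H_p(X)`-norm of the Dirichlet polynomial `∑_{n=1}^N x_n n^{-s}`, defined via the Bohr
transform as `(∫_{𝕋^ℕ} ‖∑_{n=1}^N x_n z^{α(n)}‖_X^p dz)^{1/p}`.  Here, for `n : Fin N`,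
`x n` is the coefficient of `((n : ℕ) + 1)^{-s}`. -/
def Hnorm (p : ℝ) {X : Type*} [NormedAddCommGroup X] [NormedSpace ℂ X]
    (N : ℕ) (x : Fin N → X) : ℝ :=
  (∫ z : ℕ → Circle, ‖∑ n : Fin N, mon ((n : ℕ) + 1) z • x n‖ ^ p ∂muTN) ^ (1 / p)

/-! ### Auxiliary lemmas -/

lemma Hnorm_nonneg (p : ℝ) {X : Type*} [NormedAddCommGroup X] [NormedSpace ℂ X]
    (N : ℕ) (x : Fin N → X) : 0 ≤ Hnorm p N x := by
  apply Real.rpow_nonneg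
  apply integral_nonneg
  intro z
  positivity

lemma Eavg_nonneg {N : ℕ} {F : (Fin N → Bool) → ℝ} (hF : ∀ ε, 0 ≤ F ε) : 0 ≤ Eavg N F :=
  mul_nonneg (by positivity) (Finset.sum_nonneg fun ε _ => hF ε)

lemma Eavg_comp_inj {N M : ℕ} (f : Fin N → Fin M) (hf : Function.Injective f)
    (G : (Fin N → Bool) → ℝ) :
    Eavg M (fun ε => G (ε ∘ f)) = Eavg N G := by
  classical
  let e1 : {x // x ∈ Set.range f} ⊕ {x // x ∉ Set.range f} ≃ Fin M :=
    Equiv.sumCompl (· ∈ Set.range f)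
  let e2 : Fin N ≃ {x // x ∈ Set.range f} := Equiv.ofInjective f hf
  let E : (Fin M → Bool) ≃ (Fin N → Bool) × ({x // x ∉ Set.range f} → Bool) :=
    (Equiv.arrowCongr e1.symm (Equiv.refl Bool)).trans
      ((Equiv.sumArrowEquivProdArrow _ _ Bool).trans
        (Equiv.prodCongr (Equiv.arrowCongr e2.symm (Equiv.refl Bool)) (Equiv.refl _)))
  have hcomp : ∀ ε : Fin M → Bool, ε ∘ f = (E ε).1 := by
    intro ε
    funext n
    simp [E, e1, e2, Equiv.sumArrowEquivProdArrow, Equiv.arrowCongr]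
  have hsum : ∑ ε : Fin M → Bool, G (ε ∘ f)
      = (Fintype.card ({x // x ∉ Set.range f} → Bool) : ℝ) * ∑ η : Fin N → Bool, G η := by
    calc ∑ ε : Fin M → Bool, G (ε ∘ f) = ∑ ε : Fin M → Bool, G (E ε).1 := by
          exact Finset.sum_congr rfl fun ε _ => by rw [hcomp]
      _ = ∑ w : (Fin N → Bool) × ({x // x ∉ Set.range f} → Bool), G w.1 :=
          Equiv.sum_comp E (fun w => G w.1)
      _ = _ := by
          rw [Fintype.sum_prod_type]
          simp [Finset.sum_const, nsmul_eq_mul, mul_comm]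
          rw [Finset.sum_mul]
  have hcard : (2:ℝ) ^ M = 2 ^ N * (Fintype.card ({x // x ∉ Set.range f} → Bool) : ℝ) := by
    have := Fintype.card_congr E
    simp only [Fintype.card_fun, Fintype.card_fin, Fintype.card_bool, Fintype.card_prod] at this
    rw [Fintype.card_fun, Fintype.card_bool]
    exact_mod_cast this
  unfold Eavg
  rw [hsum, hcard]
  have h2 : (Fintype.card ({x // x ∉ Set.range f} → Bool) : ℝ) ≠ 0 := by
    simp [Fintype.card_fun]
  field_simp

lemma lt_nth_prime (j : ℕ) : j < Nat.nth Nat.Prime j := by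
  induction j with
  | zero => exact lt_of_lt_of_le two_pos (Nat.prime_nth_prime 0).two_le
  | succ j ih =>
    have h2 : Nat.nth Nat.Prime j < Nat.nth Nat.Prime (j+1) :=
      Nat.nth_lt_nth Nat.infinite_setOf_prime |>.2 (Nat.lt_succ_self j)
    omega

lemma mon_mul_prime (j n : ℕ) (hn : 1 ≤ n) (hlt : n < Nat.nth Nat.Prime j) (z : ℕ → Circle) :
    mon (Nat.nth Nat.Prime j * n) z = (z j : ℂ) * mon n z := by
  set q := Nat.nth Nat.Prime j with hq
  have hqp : q.Prime := Nat.prime_nth_prime j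
  have hq0 : q ≠ 0 := hqp.ne_zero
  have hn0 : n ≠ 0 := by omega
  have hfact : (q * n).factorization = q.factorization + n.factorization :=
    Nat.factorization_mul hq0 hn0
  have hnq : n ≤ q * n := Nat.le_mul_of_pos_left n (by omega)
  have hjq : j < q := lt_nth_prime j
  have hjlt : j < q * n := by
    have : q ≤ q * n := Nat.le_mul_of_pos_right q (by omega)
    omega
  have key : ∀ i, (q * n).factorization (Nat.nth Nat.Prime i)
      = (if i = j then 1 else 0) + n.factorization (Nat.nth Nat.Prime i) := by
    intro i
    rw [hfact]
    simp only [Finsupp.add_apply, hqp.factorization, Finsupp.single_apply]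
    congr 1
    by_cases hij : i = j
    · simp [hij]; exact hq
    · have : q ≠ Nat.nth Nat.Prime i := fun hqe =>
        hij ((Nat.nth_injective Nat.infinite_setOf_prime hqe).symm)
      simp [hij, this]
  unfold mon
  have expand : ∀ i ∈ Finset.range (q * n),
      (z i : ℂ) ^ ((q * n).factorization (Nat.nth Nat.Prime i))
      = (if i = j then (z i : ℂ) else 1) * (z i : ℂ) ^ (n.factorization (Nat.nth Nat.Prime i)) := by
    intro i _
    rw [key i, pow_add]
    congr 1
    by_cases hij : i = j <;> simp [hij]
  rw [Finset.prod_congr rfl expand, Finset.prod_mul_distrib]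
  congr 1
  · rw [Finset.prod_ite_eq' (Finset.range (q*n)) j (fun i => (z i : ℂ))]
    simp [Finset.mem_range.2 hjlt]
  · symm
    apply Finset.prod_subset
    · exact Finset.range_subset_range.2 hnq
    · intro i _ hi
      rw [Finset.mem_range, not_lt] at hi
      have hni : n < Nat.nth Nat.Prime i := lt_of_le_of_lt hi (lt_nth_prime i)
      rw [Nat.factorization_eq_zero_of_lt hni, pow_zero]

lemma mon_mul_prime' (q n : ℕ) (hq : q.Prime) (hn : 1 ≤ n) (hlt : n < q) (z : ℕ → Circle) :
    mon (q * n) z = (z (Nat.count Nat.Prime q) : ℂ) * mon n z := by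
  have h := mon_mul_prime (Nat.count Nat.Prime q) n hn (by rwa [Nat.nth_count hq]) z
  rwa [Nat.nth_count hq] at h

/-- Recursive sequence of primes: `primeSeq f k` is a prime exceeding `f k` and
`primeSeq f (k-1) * (f (k-1) + 1)`. -/
def primeSeq (f : ℕ → ℕ) : ℕ → ℕ
  | 0 => (Nat.exists_infinite_primes (f 0 + 1)).choose
  | (k+1) => (Nat.exists_infinite_primes
      (max (f (k+1)) (primeSeq f k * (f k + 1)) + 1)).choose

lemma primeSeq_prime (f : ℕ → ℕ) (k : ℕ) : (primeSeq f k).Prime := by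
  cases k with
  | zero => exact (Nat.exists_infinite_primes (f 0 + 1)).choose_spec.2
  | succ k => exact (Nat.exists_infinite_primes _).choose_spec.2

lemma lt_primeSeq (f : ℕ → ℕ) (k : ℕ) : f k < primeSeq f k := by
  cases k with
  | zero => exact (Nat.exists_infinite_primes (f 0 + 1)).choose_spec.1
  | succ k =>
    have := (Nat.exists_infinite_primes
      (max (f (k+1)) (primeSeq f k * (f k + 1)) + 1)).choose_spec.1
    simp only [primeSeq]
    omega

lemma primeSeq_mul_lt (f : ℕ → ℕ) (k : ℕ) :
    primeSeq f k * (f k + 1) < primeSeq f (k+1) := by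
  have := (Nat.exists_infinite_primes
    (max (f (k+1)) (primeSeq f k * (f k + 1)) + 1)).choose_spec.1
  simp only [primeSeq]
  omega

lemma primeSeq_strictMono (f : ℕ → ℕ) : StrictMono (primeSeq f) := by
  apply strictMono_nat_of_lt_succ
  intro k
  have h1 := primeSeq_mul_lt f k
  have h2 : primeSeq f k ≤ primeSeq f k * (f k + 1) := Nat.le_mul_of_pos_right _ (by omega)
  omega

lemma primeSeq_block_unique (f : ℕ → ℕ) {k k' n n' : ℕ} (hn : n < f k) (hn' : n' < f k')
    (he : primeSeq f k * (n+1) = primeSeq f k' * (n'+1)) : k = k' ∧ n = n' := by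
  have hmain : ∀ a b m m' : ℕ, a < b → m < f a →
      primeSeq f a * (m+1) ≠ primeSeq f b * (m'+1) := by
    intro a b m m' hab hm
    have h1 : primeSeq f a * (m+1) ≤ primeSeq f a * (f a + 1) :=
      Nat.mul_le_mul_left _ (by omega)
    have h2 : primeSeq f a * (f a + 1) < primeSeq f (a+1) := primeSeq_mul_lt f a
    have h3 : primeSeq f (a+1) ≤ primeSeq f b := (primeSeq_strictMono f).monotone (by omega)
    have h4 : primeSeq f b ≤ primeSeq f b * (m'+1) := Nat.le_mul_of_pos_right _ (by omega)
    omega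
  rcases lt_trichotomy k k' with hlt | heq | hgt
  · exact absurd he (hmain k k' n n' hlt hn)
  · subst heq
    have hq : 0 < primeSeq f k := (primeSeq_prime f k).pos
    exact ⟨rfl, by have := Nat.eq_of_mul_eq_mul_left hq he; omega⟩
  · exact absurd he.symm (hmain k' k n' n hgt hn')

/-- Embedding of block positions: the position of the frequency `q (n+1)` among `1, …, q N`. -/
def emb (q N : ℕ) (hq : 0 < q) (n : Fin N) : Fin (q * N) :=
  ⟨q * ((n : ℕ) + 1) - 1, by
    have h1 : (n : ℕ) + 1 ≤ N := n.2
    have h2 : q * ((n : ℕ) + 1) ≤ q * N := Nat.mul_le_mul_left q h1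
    have h3 : 1 ≤ q * ((n : ℕ) + 1) := Nat.one_le_iff_ne_zero.2 (by positivity)
    omega⟩

lemma emb_injective (q N : ℕ) (hq : 0 < q) : Function.Injective (emb q N hq) := by
  intro n n' he
  have h3 : 1 ≤ q * ((n : ℕ) + 1) := Nat.one_le_iff_ne_zero.2 (by positivity)
  have h3' : 1 ≤ q * ((n' : ℕ) + 1) := Nat.one_le_iff_ne_zero.2 (by positivity)
  have hv : q * ((n : ℕ) + 1) - 1 = q * ((n' : ℕ) + 1) - 1 := congrArg Fin.val he
  have h4 : q * ((n : ℕ) + 1) = q * ((n' : ℕ) + 1) := by omega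
  have := Nat.eq_of_mul_eq_mul_left hq h4
  exact Fin.ext (by omega)

lemma emb_val_add_one (q N : ℕ) (hq : 0 < q) (n : Fin N) :
    ((emb q N hq n : ℕ) + 1) = q * ((n : ℕ) + 1) := by
  have h3 : 1 ≤ q * ((n : ℕ) + 1) := Nat.one_le_iff_ne_zero.2 (by positivity)
  simp only [emb]
  omega

lemma sum_block {X : Type*} [NormedAddCommGroup X] [NormedSpace ℂ X]
    (q N : ℕ) (hq : q.Prime) (hN : N < q) (u : Fin (q * N) → X) (z : ℕ → Circle) :
    ∑ m : Fin (q * N), mon ((m : ℕ) + 1) z • ((if q ∣ ((m : ℕ) + 1) then (1:ℂ) else 0) • u m)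
      = (z (Nat.count Nat.Prime q) : ℂ) •
          ∑ n : Fin N, mon ((n : ℕ) + 1) z • u (emb q N hq.pos n) := by
  classical
  have hstep : ∀ m : Fin (q * N),
      mon ((m : ℕ) + 1) z • ((if q ∣ ((m : ℕ) + 1) then (1:ℂ) else 0) • u m)
      = if q ∣ ((m : ℕ) + 1) then mon ((m : ℕ) + 1) z • u m else 0 := by
    intro m
    by_cases hd : q ∣ ((m : ℕ) + 1) <;> simp [hd]
  rw [Finset.sum_congr rfl fun m _ => hstep m, ← Finset.sum_filter]
  have himage : Finset.univ.filter (fun m : Fin (q * N) => q ∣ ((m : ℕ) + 1))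
      = Finset.univ.image (emb q N hq.pos) := by
    ext m
    simp only [Finset.mem_filter, Finset.mem_univ, true_and, Finset.mem_image]
    constructor
    · rintro ⟨t, ht⟩
      have hm1 : (m : ℕ) + 1 ≤ q * N := m.2
      have ht1 : 1 ≤ t := by
        rcases Nat.eq_zero_or_pos t with h | h
        · rw [h, mul_zero] at ht; omega
        · exact h
      have htN : t ≤ N := by
        by_contra hc
        push_neg at hc
        have : q * N < q * t := mul_lt_mul_of_pos_left hc hq.pos
        omega
      refine ⟨⟨t - 1, by omega⟩, ?_⟩
      apply Fin.ext
      simp only [emb]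
      have htt : t - 1 + 1 = t := by omega
      rw [htt]
      omega
    · rintro ⟨n, rfl⟩
      rw [emb_val_add_one]
      exact ⟨(n : ℕ) + 1, rfl⟩
  rw [himage, Finset.sum_image (fun n _ n' _ h => emb_injective q N hq.pos h)]
  rw [Finset.smul_sum]
  apply Finset.sum_congr rfl
  intro n _
  rw [emb_val_add_one, mon_mul_prime' q ((n : ℕ) + 1) hq (by omega) (by have := n.2; omega) z,
    mul_smul]

lemma Hnorm_block (p : ℝ) {X : Type*} [NormedAddCommGroup X] [NormedSpace ℂ X]
    (q N : ℕ) (hq : q.Prime) (hN : N < q) (u : Fin (q * N) → X) :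
    Hnorm p (q * N) (fun m => (if q ∣ ((m : ℕ) + 1) then (1:ℂ) else 0) • u m)
      = Hnorm p N (fun n => u (emb q N hq.pos n)) := by
  unfold Hnorm
  congr 1
  apply integral_congr_ae
  filter_upwards with z
  rw [sum_block q N hq hN u z, norm_smul, Circle.norm_coe, one_mul]

/-- If for every sequence `(x_n) ⊆ X` the system `(x_n n^{-s})` is RUD in `H_p(X)` (with a
constant possibly depending on the sequence), then a single uniform constant works. -/
theorem stmt3 {X : Type*} [NormedAddCommGroup X] [NormedSpace ℂ X] [CompleteSpace X]
    (p : ℝ) (hp1 : 1 ≤ p) (hp2 : p ≤ 2)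
    (h : ∀ x : ℕ → X, ∃ C : ℝ, 1 ≤ C ∧ ∀ (N : ℕ) (a : Fin N → ℂ),
      Hnorm p N (fun n => a n • x ((n : ℕ) + 1)) ≤
        C * Eavg N (fun ε => Hnorm p N (fun n => sgn ε n • (a n • x ((n : ℕ) + 1))))) :
    ∃ C : ℝ, 1 ≤ C ∧ ∀ (N : ℕ) (x : Fin N → X),
      Hnorm p N x ≤ C * Eavg N (fun ε => Hnorm p N (fun n => sgn ε n • x n)) := by
  classical
  by_contra hcon
  push_neg at hcon
  have hsel : ∀ k : ℕ, ∃ (N : ℕ) (x : Fin N → X),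
      ((k : ℝ) + 1) * Eavg N (fun ε => Hnorm p N (fun n => sgn ε n • x n)) < Hnorm p N x := by
    intro k
    exact hcon ((k : ℝ) + 1) (by have := (Nat.cast_nonneg (α := ℝ) k); linarith)
  choose Nf xf hf using hsel
  have hqprime : ∀ k, (primeSeq Nf k).Prime := primeSeq_prime Nf
  have hqN : ∀ k, Nf k < primeSeq Nf k := lt_primeSeq Nf
  have hxeq : ∀ (c : ℕ × ℕ) (k n : ℕ) (hc : c.2 < Nf c.1) (hn : n < Nf k),
      c.1 = k → c.2 = n → xf c.1 ⟨c.2, hc⟩ = xf k ⟨n, hn⟩ := by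
    rintro ⟨a, b⟩ k n hc hn rfl rfl
    rfl
  set x : ℕ → X := fun m =>
    if h : ∃ c : ℕ × ℕ, c.2 < Nf c.1 ∧ m = primeSeq Nf c.1 * (c.2 + 1) then
      xf h.choose.1 ⟨h.choose.2, h.choose_spec.1⟩ else 0 with hxdef
  have hx : ∀ (k n : ℕ) (hn : n < Nf k), x (primeSeq Nf k * (n + 1)) = xf k ⟨n, hn⟩ := by
    intro k n hn
    have hex : ∃ c : ℕ × ℕ, c.2 < Nf c.1 ∧
        primeSeq Nf k * (n + 1) = primeSeq Nf c.1 * (c.2 + 1) := ⟨(k, n), hn, rfl⟩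
    rw [hxdef]
    simp only []
    rw [dif_pos hex]
    obtain ⟨hk, hn'⟩ := primeSeq_block_unique Nf hex.choose_spec.1 hn hex.choose_spec.2.symm
    exact hxeq _ k n _ hn hk hn'
  obtain ⟨C, hC1, hCx⟩ := h x
  obtain ⟨k, hk⟩ := exists_nat_ge C
  set Q := primeSeq Nf k with hQdef
  set N := Nf k with hNdef
  have hQp : Q.Prime := hqprime k
  have hQN : N < Q := hqN k
  have hu : ∀ n : Fin N, x ((emb Q N hQp.pos n : ℕ) + 1) = xf k n := by
    intro n
    rw [emb_val_add_one, hx k (n : ℕ) n.2]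
  have hmain := hCx (Q * N) (fun m => if Q ∣ ((m : ℕ) + 1) then (1:ℂ) else 0)
  beta_reduce at hmain
  have hL : Hnorm p (Q * N)
      (fun m => (if Q ∣ ((m : ℕ) + 1) then (1:ℂ) else 0) • x ((m : ℕ) + 1))
      = Hnorm p N (xf k) := by
    rw [Hnorm_block p Q N hQp hQN (fun m => x ((m : ℕ) + 1))]
    congr 1
    funext n
    exact hu n
  have hR : ∀ ε : Fin (Q * N) → Bool,
      Hnorm p (Q * N)
        (fun m => sgn ε m • ((if Q ∣ ((m : ℕ) + 1) then (1:ℂ) else 0) • x ((m : ℕ) + 1)))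
      = Hnorm p N (fun n => sgn (ε ∘ emb Q N hQp.pos) n • xf k n) := by
    intro ε
    have h1 : (fun m : Fin (Q * N) =>
        sgn ε m • ((if Q ∣ ((m : ℕ) + 1) then (1:ℂ) else 0) • x ((m : ℕ) + 1)))
        = fun m : Fin (Q * N) =>
            (if Q ∣ ((m : ℕ) + 1) then (1:ℂ) else 0) • (sgn ε m • x ((m : ℕ) + 1)) := by
      funext m
      rw [smul_comm]
    rw [h1, Hnorm_block p Q N hQp hQN (fun m => sgn ε m • x ((m : ℕ) + 1))]
    congr 1
    funext n
    rw [hu n]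
    rfl
  have hEavg : Eavg (Q * N) (fun ε => Hnorm p (Q * N)
        (fun m => sgn ε m • ((if Q ∣ ((m : ℕ) + 1) then (1:ℂ) else 0) • x ((m : ℕ) + 1))))
      = Eavg N (fun η => Hnorm p N (fun n => sgn η n • xf k n)) := by
    have h2 : (fun ε : Fin (Q * N) → Bool => Hnorm p (Q * N)
        (fun m => sgn ε m • ((if Q ∣ ((m : ℕ) + 1) then (1:ℂ) else 0) • x ((m : ℕ) + 1))))
        = fun ε => (fun η => Hnorm p N (fun n => sgn η n • xf k n)) (ε ∘ emb Q N hQp.pos) := by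
      funext ε
      exact hR ε
    rw [h2]
    exact Eavg_comp_inj (emb Q N hQp.pos) (emb_injective Q N hQp.pos)
      (fun η => Hnorm p N fun n => sgn η n • xf k n)
  rw [hL, hEavg] at hmain
  have hE0 : 0 ≤ Eavg N (fun η => Hnorm p N (fun n => sgn η n • xf k n)) :=
    Eavg_nonneg fun η => Hnorm_nonneg p N _
  have hfk := hf k
  have hCk : C * Eavg N (fun η => Hnorm p N (fun n => sgn η n • xf k n))
      ≤ ((k : ℝ) + 1) * Eavg N (fun η => Hnorm p N (fun n => sgn η n • xf k n)) :=
    mul_le_mul_of_nonneg_right (by linarith) hE0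
  linarith
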